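/- Under the hypotheses of the previous theorem (universal₂ hash family from A to {1,…,M}), the expected mutual information satisfies E_X I(f_X(A):E) ≤ (1/s)·M^s·e^{−H̃_{1+s}(A|E)} for every s ∈ (0,1]. In particular there exists a fixed function f: A → {1,…,M} with I(f(A):E) ≤ (1/s)·M^s·e^{−H̃_{1+s}(A|E)}. -/

import Mathlib

open Real Finset

lemma jensen_log' {ι : Type*} [Fintype ι] (w x : ι → ℝ)
    (hw : ∀ i, 0 ≤ w i) (hw1 : ∑ i, w i = 1)
    (hx : ∀ i, w i ≠ 0 → 0 < x i) :
    ∑ i, w i * Real.log (x i) ≤ Real.log (∑ i, w i * x i) := by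
  classical
  set t := univ.filter (fun i => w i ≠ 0) with ht
  have hsub : ∀ (g : ι → ℝ), ∑ i ∈ t, w i * g i = ∑ i, w i * g i := by
    intro g
    refine Finset.sum_subset (subset_univ _) ?_
    intro i _ hi
    simp only [ht, mem_filter, mem_univ, true_and, not_not] at hi
    simp [hi]
  have hw1' : ∑ i ∈ t, w i = 1 := by
    rw [← hw1]
    refine Finset.sum_subset (subset_univ _) ?_
    intro i _ hi; simp only [ht, mem_filter, mem_univ, true_and, not_not] at hi; exact hi
  have h := (strictConcaveOn_log_Ioi.concaveOn).le_map_sum (t := t) (w := w) (p := x)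
    (fun i _ => hw i) hw1' (fun i hi => hx i (by simpa [ht] using hi))
  simp only [smul_eq_mul, Function.comp] at h
  calc ∑ i, w i * Real.log (x i) = ∑ i ∈ t, w i * Real.log (x i) := (hsub _).symm
    _ ≤ Real.log (∑ i ∈ t, w i * x i) := h
    _ = _ := by rw [hsub]

lemma rpow_subadd {x y s : ℝ} (hx : 0 ≤ x) (hy : 0 ≤ y) (hs0 : 0 ≤ s) (hs1 : s ≤ 1) :
    (x + y) ^ s ≤ x ^ s + y ^ s := by
  have h := NNReal.rpow_add_le_add_rpow (x.toNNReal) (y.toNNReal) hs0 hs1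
  have h2 := NNReal.coe_le_coe.2 h
  rw [← Real.toNNReal_add hx hy] at h2
  simpa [NNReal.coe_rpow, Real.coe_toNNReal _ (by linarith : (0:ℝ) ≤ x + y),
    Real.coe_toNNReal _ hx, Real.coe_toNNReal _ hy] using h2

lemma jensen_rpow' {ι : Type*} [Fintype ι] (w x : ι → ℝ) (s : ℝ)
    (hw : ∀ i, 0 ≤ w i) (hw1 : ∑ i, w i = 1) (hx : ∀ i, 0 ≤ x i)
    (hs0 : 0 ≤ s) (hs1 : s ≤ 1) :
    ∑ i, w i * x i ^ s ≤ (∑ i, w i * x i) ^ s := by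
  have h := (Real.concaveOn_rpow hs0 hs1).le_map_sum (t := univ) (w := w) (p := x)
    (fun i _ => hw i) hw1 (fun i _ => Set.mem_Ici.2 (hx i))
  simpa [smul_eq_mul] using h

/-- Theorem 2 of the paper: for a universal₂ hash family `f` from `A` to `Fin M`,
a joint distribution `P` on `A × E`, and `s ∈ (0,1]`, the expected mutual
information satisfies `E_X I(f_X(A):E) ≤ (1/s)·M^s·e^{−H̃_{1+s}(A|E)}`;
in particular some fixed function `f ω` achieves this bound. -/
theorem expected_mutual_info_hash_bound
    {A E Ω : Type*} [Fintype A] [Fintype E] [Fintype Ω] [DecidableEq A]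
    (M : ℕ) (hM : 0 < M)
    (μ : Ω → ℝ) (hμ : ∀ ω, 0 ≤ μ ω) (hμ1 : ∑ ω, μ ω = 1)
    (f : Ω → A → Fin M)
    (huniv : ∀ a₁ a₂ : A, a₁ ≠ a₂ →
      ∑ ω ∈ univ.filter (fun ω => f ω a₁ = f ω a₂), μ ω ≤ 1 / M)
    (P : A × E → ℝ) (hP : ∀ p, 0 ≤ P p) (hP1 : ∑ p, P p = 1)
    (s : ℝ) (hs0 : 0 < s) (hs1 : s ≤ 1) :
    -- mutual information of the hashed variable with E, for the function `f ω`
    (∑ ω, μ ω *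
        ((-∑ i : Fin M,
            (∑ e, ∑ a ∈ univ.filter (fun a => f ω a = i), P (a, e)) *
              Real.log (∑ e, ∑ a ∈ univ.filter (fun a => f ω a = i), P (a, e)))
          - (-∑ i : Fin M, ∑ e,
              (∑ a ∈ univ.filter (fun a => f ω a = i), P (a, e)) *
                Real.log ((∑ a ∈ univ.filter (fun a => f ω a = i), P (a, e)) /
                  (∑ a', P (a', e)))))
      ≤ (1 / s) * (M : ℝ) ^ s *
          Real.exp (-(-Real.log (∑ a, ∑ e, P (a, e) ^ (1 + s) * (∑ a', P (a', e)) ^ (-s)))))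
    ∧ (∃ ω : Ω,
        ((-∑ i : Fin M,
            (∑ e, ∑ a ∈ univ.filter (fun a => f ω a = i), P (a, e)) *
              Real.log (∑ e, ∑ a ∈ univ.filter (fun a => f ω a = i), P (a, e)))
          - (-∑ i : Fin M, ∑ e,
              (∑ a ∈ univ.filter (fun a => f ω a = i), P (a, e)) *
                Real.log ((∑ a ∈ univ.filter (fun a => f ω a = i), P (a, e)) /
                  (∑ a', P (a', e)))))
        ≤ (1 / s) * (M : ℝ) ^ s *
            Real.exp (-(-Real.log (∑ a, ∑ e, P (a, e) ^ (1 + s) * (∑ a', P (a', e)) ^ (-s))))) := by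
  set PE : E → ℝ := fun e => ∑ a', P (a', e) with hPEdef
  set Q : Ω → Fin M → E → ℝ :=
    fun ω i e => ∑ a ∈ univ.filter (fun a => f ω a = i), P (a, e) with hQdef
  set QI : Ω → Fin M → ℝ := fun ω i => ∑ e, Q ω i e with hQIdef
  set K : Ω → ℝ := fun ω => ∑ i, ∑ e, Q ω i e ^ (1 + s) * PE e ^ (-s) with hKdef
  -- basic facts
  have hPE0 : ∀ e, 0 ≤ PE e := fun e => Finset.sum_nonneg fun a _ => hP _
  have hQ0 : ∀ ω i e, 0 ≤ Q ω i e := fun ω i e => Finset.sum_nonneg fun a _ => hP _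
  have hQI0 : ∀ ω i, 0 ≤ QI ω i := fun ω i => Finset.sum_nonneg fun e _ => hQ0 ω i e
  have hQle : ∀ ω i e, Q ω i e ≤ PE e := fun ω i e =>
    Finset.sum_le_sum_of_subset_of_nonneg (Finset.filter_subset _ _) fun a _ _ => hP _
  have hQsumI : ∀ ω e, ∑ i, Q ω i e = PE e := fun ω e =>
    Finset.sum_fiberwise univ (f ω) fun a => P (a, e)
  have hPA : ∑ a, ∑ e, P (a, e) = 1 := by rw [← Fintype.sum_prod_type]; exact hP1
  have hPE1 : ∑ e, PE e = 1 := by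
    rw [hPEdef, Finset.sum_comm]; exact hPA
  have hQ1 : ∀ ω, ∑ i, QI ω i = 1 := by
    intro ω
    calc ∑ i, QI ω i = ∑ i, ∑ e, Q ω i e := rfl
      _ = ∑ e, ∑ i, Q ω i e := Finset.sum_comm
      _ = ∑ e, PE e := Finset.sum_congr rfl fun e _ => hQsumI ω e
      _ = 1 := hPE1
  have hPex : ∃ p, 0 < P p := by
    by_contra h
    push_neg at h
    have hz : ∑ p, P p = 0 := Finset.sum_eq_zero fun p _ => le_antisymm (h p) (hP p)
    rw [hz] at hP1; norm_num at hP1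
  have hKpos : ∀ ω, 0 < K ω := by
    intro ω
    obtain ⟨⟨a0, e0⟩, hp0⟩ := hPex
    have hQp : 0 < Q ω (f ω a0) e0 := by
      refine lt_of_lt_of_le hp0 ?_
      exact Finset.single_le_sum (fun a _ => hP (a, e0))
        (Finset.mem_filter.2 ⟨Finset.mem_univ _, rfl⟩)
    have hPEp : 0 < PE e0 := lt_of_lt_of_le hQp (hQle ω _ e0)
    refine Finset.sum_pos' (fun i _ => Finset.sum_nonneg fun e _ =>
      mul_nonneg (Real.rpow_nonneg (hQ0 ω i e) _) (Real.rpow_nonneg (hPE0 e) _))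
      ⟨f ω a0, Finset.mem_univ _, ?_⟩
    refine Finset.sum_pos' (fun e _ =>
      mul_nonneg (Real.rpow_nonneg (hQ0 ω _ e) _) (Real.rpow_nonneg (hPE0 e) _))
      ⟨e0, Finset.mem_univ _, mul_pos (Real.rpow_pos_of_pos hQp _) (Real.rpow_pos_of_pos hPEp _)⟩
  -- entropy bound
  have hH : ∀ ω, -∑ i, QI ω i * Real.log (QI ω i) ≤ Real.log M := by
    intro ω
    have hj := jensen_log' (QI ω) (fun i => (QI ω i)⁻¹) (hQI0 ω) (hQ1 ω)
      (fun i hi => inv_pos.2 ((hQI0 ω i).lt_of_ne (Ne.symm hi)))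
    have hL : ∑ i, QI ω i * Real.log (QI ω i)⁻¹ = -∑ i, QI ω i * Real.log (QI ω i) := by
      rw [← Finset.sum_neg_distrib]
      exact Finset.sum_congr rfl fun i _ => by rw [Real.log_inv]; ring
    have hS : ∑ i, QI ω i * (QI ω i)⁻¹ ≤ (M : ℝ) := by
      calc ∑ i, QI ω i * (QI ω i)⁻¹ ≤ ∑ _i : Fin M, (1 : ℝ) := by
            refine Finset.sum_le_sum fun i _ => ?_
            rcases eq_or_ne (QI ω i) 0 with h | h
            · simp [h]
            · rw [mul_inv_cancel₀ h]
        _ = M := by simp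
    have hSpos : 0 < ∑ i, QI ω i * (QI ω i)⁻¹ := by
      obtain ⟨i₀, hi₀⟩ : ∃ i, QI ω i ≠ 0 := by
        by_contra h
        push_neg at h
        have := hQ1 ω
        rw [Finset.sum_eq_zero fun i _ => h i] at this
        norm_num at this
      refine Finset.sum_pos' (fun i _ => mul_nonneg (hQI0 ω i) (inv_nonneg.2 (hQI0 ω i))) ⟨i₀, Finset.mem_univ _, ?_⟩
      rw [mul_inv_cancel₀ hi₀]; norm_num
    rw [hL] at hj
    exact hj.trans (Real.log_le_log hSpos hS)
  -- Renyi-type bound per ω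
  have hMN : (0:ℝ) < M := Nat.cast_pos.2 hM
  have hD : ∀ ω, Real.log M + ∑ i, ∑ e, Q ω i e * Real.log (Q ω i e / PE e)
      ≤ (1 / s) * Real.log ((M : ℝ) ^ s * K ω) := by
    intro ω
    have hw1 : ∑ p : Fin M × E, Q ω p.1 p.2 = 1 := by
      rw [Fintype.sum_prod_type]; exact hQ1 ω
    have hj := jensen_log' (fun p : Fin M × E => Q ω p.1 p.2)
      (fun p => ((M : ℝ) * Q ω p.1 p.2 / PE p.2) ^ s)
      (fun p => hQ0 ω p.1 p.2) hw1 ?hx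
    case hx =>
      intro p hp
      have hQp : 0 < Q ω p.1 p.2 := (hQ0 ω p.1 p.2).lt_of_ne (Ne.symm hp)
      have hPEp : 0 < PE p.2 := lt_of_lt_of_le hQp (hQle ω p.1 p.2)
      exact Real.rpow_pos_of_pos (by positivity) _
    -- LHS of jensen
    have hL : ∑ p : Fin M × E, Q ω p.1 p.2 * Real.log (((M : ℝ) * Q ω p.1 p.2 / PE p.2) ^ s)
        = s * (Real.log M + ∑ i, ∑ e, Q ω i e * Real.log (Q ω i e / PE e)) := by
      have hterm : ∀ i e, Q ω i e * Real.log (((M : ℝ) * Q ω i e / PE e) ^ s)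
          = s * (Q ω i e * Real.log M + Q ω i e * Real.log (Q ω i e / PE e)) := by
        intro i e
        rcases eq_or_ne (Q ω i e) 0 with h | h
        · rw [h]; simp
        · have hQp : 0 < Q ω i e := (hQ0 ω i e).lt_of_ne (Ne.symm h)
          have hPEp : 0 < PE e := lt_of_lt_of_le hQp (hQle ω i e)
          rw [Real.log_rpow (by positivity), mul_div_assoc,
            Real.log_mul (by positivity) (by positivity)]
          ring
      calc ∑ p : Fin M × E, Q ω p.1 p.2 * Real.log (((M : ℝ) * Q ω p.1 p.2 / PE p.2) ^ s)
          = ∑ i, ∑ e, (s * (Q ω i e * Real.log M + Q ω i e * Real.log (Q ω i e / PE e))) := by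
            rw [Fintype.sum_prod_type]
            exact Finset.sum_congr rfl fun i _ => Finset.sum_congr rfl fun e _ => hterm i e
        _ = s * ((∑ i, ∑ e, Q ω i e) * Real.log M + ∑ i, ∑ e, Q ω i e * Real.log (Q ω i e / PE e)) := by
            simp_rw [← Finset.mul_sum, Finset.sum_add_distrib, ← Finset.sum_mul]
        _ = s * (Real.log M + ∑ i, ∑ e, Q ω i e * Real.log (Q ω i e / PE e)) := by
            rw [show (∑ i, ∑ e, Q ω i e) = 1 from hQ1 ω, one_mul]
    -- RHS of jensen
    have hR : ∑ p : Fin M × E, Q ω p.1 p.2 * ((M : ℝ) * Q ω p.1 p.2 / PE p.2) ^ s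
        = (M : ℝ) ^ s * K ω := by
      have hterm : ∀ i e, Q ω i e * ((M : ℝ) * Q ω i e / PE e) ^ s
          = (M : ℝ) ^ s * (Q ω i e ^ (1 + s) * PE e ^ (-s)) := by
        intro i e
        rcases eq_or_ne (Q ω i e) 0 with h | h
        · rw [h]; simp [Real.zero_rpow (by positivity : (0:ℝ) < 1 + s).ne']
        · have hQp : 0 < Q ω i e := (hQ0 ω i e).lt_of_ne (Ne.symm h)
          have hPEp : 0 < PE e := lt_of_lt_of_le hQp (hQle ω i e)
          rw [mul_div_assoc, Real.mul_rpow (Nat.cast_nonneg M) (by positivity),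
            Real.div_rpow hQp.le hPEp.le, Real.rpow_neg hPEp.le,
            Real.rpow_add hQp, Real.rpow_one]
          field_simp
      calc ∑ p : Fin M × E, Q ω p.1 p.2 * ((M : ℝ) * Q ω p.1 p.2 / PE p.2) ^ s
          = ∑ i, ∑ e, (M : ℝ) ^ s * (Q ω i e ^ (1 + s) * PE e ^ (-s)) := by
            rw [Fintype.sum_prod_type]
            exact Finset.sum_congr rfl fun i _ => Finset.sum_congr rfl fun e _ => hterm i e
        _ = (M : ℝ) ^ s * K ω := by
            rw [hKdef]
            simp_rw [Finset.mul_sum]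
    rw [hL, hR] at hj
    rw [one_div, inv_mul_eq_div, le_div_iff₀ hs0, mul_comm]
    exact hj
  set MI : Ω → ℝ := fun ω =>
    (-∑ i : Fin M, QI ω i * Real.log (QI ω i))
      - (-∑ i : Fin M, ∑ e, Q ω i e * Real.log (Q ω i e / PE e)) with hMIdef
  have hMI_le : ∀ ω, MI ω ≤ (1 / s) * Real.log ((M : ℝ) ^ s * K ω) := by
    intro ω
    have h1 := hH ω
    have h2 := hD ω
    have h3 : MI ω = (-∑ i, QI ω i * Real.log (QI ω i))
        + ∑ i, ∑ e, Q ω i e * Real.log (Q ω i e / PE e) := by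
      rw [hMIdef]; ring
    linarith
  have hEK : ∑ ω, μ ω * K ω ≤ (∑ a, ∑ e, P (a, e) ^ (1 + s) * PE e ^ (-s)) + (M : ℝ) ^ (-s) := by
    set R : Ω → A → E → ℝ :=
      fun ω a e => ∑ a' ∈ univ.filter (fun a' => a' ≠ a ∧ f ω a' = f ω a), P (a', e) with hRdef
    have hR0 : ∀ ω a e, 0 ≤ R ω a e := fun ω a e => Finset.sum_nonneg fun a' _ => hP _
    have hKb : ∀ ω, K ω ≤ (∑ a, ∑ e, P (a, e) ^ (1 + s) * PE e ^ (-s))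
        + ∑ a, ∑ e, P (a, e) * PE e ^ (-s) * R ω a e ^ s := by
      intro ω
      have hsplitQ : ∀ a e, Q ω (f ω a) e = P (a, e) + R ω a e := by
        intro a e
        have hmem : a ∈ univ.filter (fun a' => f ω a' = f ω a) :=
          Finset.mem_filter.2 ⟨Finset.mem_univ _, rfl⟩
        have h1 : Q ω (f ω a) e = ∑ a' ∈ univ.filter (fun a' => f ω a' = f ω a), P (a', e) := rfl
        rw [h1, ← Finset.add_sum_erase _ _ hmem]
        congr 1
        refine Finset.sum_congr ?_ fun _ _ => rfl
        ext a'
        simp only [Finset.mem_erase, Finset.mem_filter, Finset.mem_univ, true_and]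
      have hinner : ∀ e, ∑ i, Q ω i e ^ (1 + s)
          ≤ ∑ a, (P (a, e) ^ (1 + s) + P (a, e) * R ω a e ^ s) := by
        intro e
        have h1 : ∀ i, Q ω i e ^ (1 + s)
            = ∑ a ∈ univ.filter (fun a => f ω a = i), P (a, e) * Q ω i e ^ s := by
          intro i
          rw [← Finset.sum_mul]
          rw [show (∑ a ∈ univ.filter (fun a => f ω a = i), P (a, e)) = Q ω i e from rfl]
          rcases eq_or_ne (Q ω i e) 0 with h | h
          · rw [h, Real.zero_rpow (by positivity : (0:ℝ) < 1 + s).ne', zero_mul]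
          · have hq : 0 < Q ω i e := (hQ0 ω i e).lt_of_ne (Ne.symm h)
            rw [Real.rpow_add hq, Real.rpow_one]
        calc ∑ i, Q ω i e ^ (1 + s)
            = ∑ i, ∑ a ∈ univ.filter (fun a => f ω a = i), P (a, e) * Q ω i e ^ s :=
              Finset.sum_congr rfl fun i _ => h1 i
          _ ≤ ∑ i, ∑ a ∈ univ.filter (fun a => f ω a = i),
                (P (a, e) ^ (1 + s) + P (a, e) * R ω a e ^ s) := by
              refine Finset.sum_le_sum fun i _ => Finset.sum_le_sum fun a ha => ?_
              have hfa : f ω a = i := (Finset.mem_filter.1 ha).2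
              subst hfa
              have hsub : Q ω (f ω a) e ^ s ≤ P (a, e) ^ s + R ω a e ^ s := by
                rw [hsplitQ a e]
                exact rpow_subadd (hP _) (hR0 ω a e) hs0.le hs1
              calc P (a, e) * Q ω (f ω a) e ^ s
                  ≤ P (a, e) * (P (a, e) ^ s + R ω a e ^ s) :=
                    mul_le_mul_of_nonneg_left hsub (hP _)
                _ = P (a, e) ^ (1 + s) + P (a, e) * R ω a e ^ s := by
                    rcases eq_or_ne (P (a, e)) 0 with h | h
                    · rw [h]; simp [Real.zero_rpow (by positivity : (0:ℝ) < 1 + s).ne']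
                    · have hp : 0 < P (a, e) := (hP _).lt_of_ne (Ne.symm h)
                      rw [Real.rpow_add hp, Real.rpow_one, mul_add]
          _ = ∑ a, (P (a, e) ^ (1 + s) + P (a, e) * R ω a e ^ s) :=
              Finset.sum_fiberwise univ (f ω) _
      calc K ω = ∑ e, PE e ^ (-s) * ∑ i, Q ω i e ^ (1 + s) := by
            rw [show K ω = ∑ i, ∑ e, Q ω i e ^ (1 + s) * PE e ^ (-s) from rfl, Finset.sum_comm]
            exact Finset.sum_congr rfl fun e _ => by
              rw [Finset.mul_sum]
              exact Finset.sum_congr rfl fun i _ => by ring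
        _ ≤ ∑ e, PE e ^ (-s) * ∑ a, (P (a, e) ^ (1 + s) + P (a, e) * R ω a e ^ s) := by
            refine Finset.sum_le_sum fun e _ => ?_
            exact mul_le_mul_of_nonneg_left (hinner e) (Real.rpow_nonneg (hPE0 e) _)
        _ = (∑ a, ∑ e, P (a, e) ^ (1 + s) * PE e ^ (-s))
            + ∑ a, ∑ e, P (a, e) * PE e ^ (-s) * R ω a e ^ s := by
            simp_rw [Finset.mul_sum, mul_add, Finset.sum_add_distrib]
            congr 1
            · rw [Finset.sum_comm]
              exact Finset.sum_congr rfl fun a _ => Finset.sum_congr rfl fun e _ => by ring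
            · rw [Finset.sum_comm]
              exact Finset.sum_congr rfl fun a _ => Finset.sum_congr rfl fun e _ => by ring
    have hT : ∑ ω, μ ω * (∑ a, ∑ e, P (a, e) * PE e ^ (-s) * R ω a e ^ s)
        = ∑ a, ∑ e, P (a, e) * PE e ^ (-s) * ∑ ω, μ ω * R ω a e ^ s := by
      simp_rw [Finset.mul_sum]
      rw [Finset.sum_comm]
      refine Finset.sum_congr rfl fun a _ => ?_
      rw [Finset.sum_comm]
      exact Finset.sum_congr rfl fun e _ => Finset.sum_congr rfl fun ω _ => by ring
    have hER : ∀ a e, ∑ ω, μ ω * R ω a e ≤ PE e / M := by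
      intro a e
      have hR' : ∀ ω, R ω a e
          = ∑ a' ∈ univ.filter (fun a' => a' ≠ a), if f ω a' = f ω a then P (a', e) else 0 := by
        intro ω
        rw [show R ω a e
            = ∑ a' ∈ univ.filter (fun a' => a' ≠ a ∧ f ω a' = f ω a), P (a', e) from rfl]
        rw [show (univ.filter (fun a' => a' ≠ a ∧ f ω a' = f ω a))
            = (univ.filter (fun a' => a' ≠ a)).filter (fun a' => f ω a' = f ω a) by
          rw [Finset.filter_filter]]
        rw [Finset.sum_filter]
      have h1 : ∑ ω, μ ω * R ω a e
          = ∑ a' ∈ univ.filter (fun a' => a' ≠ a),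
              P (a', e) * ∑ ω ∈ univ.filter (fun ω => f ω a' = f ω a), μ ω := by
        simp_rw [hR', Finset.mul_sum]
        rw [Finset.sum_comm]
        refine Finset.sum_congr rfl fun a' _ => ?_
        rw [Finset.sum_filter]
        refine Finset.sum_congr rfl fun ω _ => ?_
        split_ifs with h
        · ring
        · ring
      rw [h1]
      calc ∑ a' ∈ univ.filter (fun a' => a' ≠ a),
            P (a', e) * ∑ ω ∈ univ.filter (fun ω => f ω a' = f ω a), μ ω
          ≤ ∑ a' ∈ univ.filter (fun a' => a' ≠ a), P (a', e) * (1 / (M:ℝ)) := by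
            refine Finset.sum_le_sum fun a' ha' => ?_
            refine mul_le_mul_of_nonneg_left ?_ (hP _)
            exact huniv a' a (Finset.mem_filter.1 ha').2
        _ ≤ ∑ a', P (a', e) * (1 / (M:ℝ)) := by
            refine Finset.sum_le_sum_of_subset_of_nonneg (Finset.filter_subset _ _)
              fun a' _ _ => mul_nonneg (hP _) (by positivity)
        _ = PE e / M := by
            rw [← Finset.sum_mul, mul_one_div]
    have hterm2 : ∀ a e, P (a, e) * PE e ^ (-s) * (∑ ω, μ ω * R ω a e ^ s)
        ≤ P (a, e) * (M:ℝ) ^ (-s) := by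
      intro a e
      have hjen := jensen_rpow' μ (fun ω => R ω a e) s hμ hμ1 (fun ω => hR0 ω a e) hs0.le hs1
      have hmono : (∑ ω, μ ω * R ω a e) ^ s ≤ (PE e / M) ^ s :=
        Real.rpow_le_rpow (Finset.sum_nonneg fun ω _ => mul_nonneg (hμ ω) (hR0 ω a e))
          (hER a e) hs0.le
      have hb : ∑ ω, μ ω * R ω a e ^ s ≤ (PE e / M) ^ s := hjen.trans hmono
      calc P (a, e) * PE e ^ (-s) * (∑ ω, μ ω * R ω a e ^ s)
          ≤ P (a, e) * PE e ^ (-s) * (PE e / M) ^ s := by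
            refine mul_le_mul_of_nonneg_left hb ?_
            exact mul_nonneg (hP _) (Real.rpow_nonneg (hPE0 e) _)
        _ ≤ P (a, e) * (M:ℝ) ^ (-s) := by
            rcases eq_or_ne (P (a, e)) 0 with h | h
            · rw [h]; simp
            · have hp : 0 < P (a, e) := (hP _).lt_of_ne (Ne.symm h)
              have hPEp : 0 < PE e := lt_of_lt_of_le hp
                (Finset.single_le_sum (fun a'' _ => hP (a'', e)) (Finset.mem_univ a))
              have hne : PE e ^ s ≠ 0 := (Real.rpow_pos_of_pos hPEp s).ne'
              have hMne : ((M:ℝ) ^ s) ≠ 0 := (Real.rpow_pos_of_pos hMN s).ne'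
              rw [Real.div_rpow hPEp.le (Nat.cast_nonneg M), Real.rpow_neg hPEp.le,
                Real.rpow_neg (Nat.cast_nonneg M)]
              refine le_of_eq ?_
              field_simp
    calc ∑ ω, μ ω * K ω
        ≤ ∑ ω, μ ω * ((∑ a, ∑ e, P (a, e) ^ (1 + s) * PE e ^ (-s))
            + ∑ a, ∑ e, P (a, e) * PE e ^ (-s) * R ω a e ^ s) :=
          Finset.sum_le_sum fun ω _ => mul_le_mul_of_nonneg_left (hKb ω) (hμ ω)
      _ = (∑ a, ∑ e, P (a, e) ^ (1 + s) * PE e ^ (-s))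
          + ∑ ω, μ ω * (∑ a, ∑ e, P (a, e) * PE e ^ (-s) * R ω a e ^ s) := by
          simp_rw [mul_add]
          rw [Finset.sum_add_distrib, ← Finset.sum_mul, hμ1, one_mul]
      _ ≤ (∑ a, ∑ e, P (a, e) ^ (1 + s) * PE e ^ (-s)) + (M:ℝ) ^ (-s) := by
          refine add_le_add_right ?_ _
          rw [hT]
          calc ∑ a, ∑ e, P (a, e) * PE e ^ (-s) * ∑ ω, μ ω * R ω a e ^ s
              ≤ ∑ a, ∑ e, P (a, e) * (M:ℝ) ^ (-s) :=
                Finset.sum_le_sum fun a _ => Finset.sum_le_sum fun e _ => hterm2 a e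
            _ = (M:ℝ) ^ (-s) := by
                simp_rw [← Finset.sum_mul]
                rw [hPA, one_mul]
  set C : ℝ := ∑ a, ∑ e, P (a, e) ^ (1 + s) * PE e ^ (-s) with hCdef
  have hC : 0 < C := by
    obtain ⟨⟨a0, e0⟩, hp0⟩ := hPex
    have hPEp : 0 < PE e0 := lt_of_lt_of_le hp0
      (Finset.single_le_sum (fun a _ => hP (a, e0)) (Finset.mem_univ a0))
    refine Finset.sum_pos' (fun a _ => Finset.sum_nonneg fun e _ =>
      mul_nonneg (Real.rpow_nonneg (hP _) _) (Real.rpow_nonneg (hPE0 e) _))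
      ⟨a0, Finset.mem_univ _, ?_⟩
    refine Finset.sum_pos' (fun e _ =>
      mul_nonneg (Real.rpow_nonneg (hP _) _) (Real.rpow_nonneg (hPE0 e) _))
      ⟨e0, Finset.mem_univ _, mul_pos (Real.rpow_pos_of_pos hp0 _) (Real.rpow_pos_of_pos hPEp _)⟩
  -- expectation chain
  have hstep1 : ∑ ω, μ ω * MI ω ≤ (1 / s) * ∑ ω, μ ω * Real.log ((M : ℝ) ^ s * K ω) := by
    rw [Finset.mul_sum]
    refine Finset.sum_le_sum fun ω _ => ?_
    calc μ ω * MI ω ≤ μ ω * ((1 / s) * Real.log ((M : ℝ) ^ s * K ω)) :=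
          mul_le_mul_of_nonneg_left (hMI_le ω) (hμ ω)
      _ = (1 / s) * (μ ω * Real.log ((M : ℝ) ^ s * K ω)) := by ring
  have hstep2 : ∑ ω, μ ω * Real.log ((M : ℝ) ^ s * K ω)
      ≤ Real.log ((M : ℝ) ^ s * ∑ ω, μ ω * K ω) := by
    have hj := jensen_log' μ (fun ω => (M : ℝ) ^ s * K ω) hμ hμ1
      (fun ω _ => mul_pos (Real.rpow_pos_of_pos hMN s) (hKpos ω))
    have heq : ∑ ω, μ ω * ((M : ℝ) ^ s * K ω) = (M : ℝ) ^ s * ∑ ω, μ ω * K ω := by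
      rw [Finset.mul_sum]
      exact Finset.sum_congr rfl fun ω _ => by ring
    rwa [heq] at hj
  have hEKpos : 0 < ∑ ω, μ ω * K ω := by
    obtain ⟨ω₀, hω₀⟩ : ∃ ω, 0 < μ ω := by
      by_contra h
      push_neg at h
      have hz : ∑ ω, μ ω = 0 := Finset.sum_eq_zero fun ω _ => le_antisymm (h ω) (hμ ω)
      rw [hz] at hμ1; norm_num at hμ1
    exact Finset.sum_pos' (fun ω _ => mul_nonneg (hμ ω) (hKpos ω).le)
      ⟨ω₀, Finset.mem_univ _, mul_pos hω₀ (hKpos ω₀)⟩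
  have hstep3 : Real.log ((M : ℝ) ^ s * ∑ ω, μ ω * K ω) ≤ Real.log ((M : ℝ) ^ s * C + 1) := by
    refine Real.log_le_log (by positivity) ?_
    calc (M : ℝ) ^ s * ∑ ω, μ ω * K ω ≤ (M : ℝ) ^ s * (C + (M : ℝ) ^ (-s)) :=
          mul_le_mul_of_nonneg_left hEK (Real.rpow_nonneg (Nat.cast_nonneg M) s)
      _ = (M : ℝ) ^ s * C + 1 := by
          rw [mul_add, ← Real.rpow_add hMN]
          norm_num
  have hstep4 : Real.log ((M : ℝ) ^ s * C + 1) ≤ (M : ℝ) ^ s * C := by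
    have h := Real.log_le_sub_one_of_pos
      (show (0:ℝ) < (M : ℝ) ^ s * C + 1 by positivity)
    linarith
  have main : ∑ ω, μ ω * MI ω ≤ (1 / s) * (M : ℝ) ^ s * C := by
    have h0 : (0:ℝ) ≤ 1 / s := by positivity
    calc ∑ ω, μ ω * MI ω ≤ (1 / s) * ∑ ω, μ ω * Real.log ((M : ℝ) ^ s * K ω) := hstep1
      _ ≤ (1 / s) * ((M : ℝ) ^ s * C) := by
          refine mul_le_mul_of_nonneg_left ?_ h0
          exact hstep2.trans (hstep3.trans hstep4)
      _ = (1 / s) * (M : ℝ) ^ s * C := by ring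
  have hSC : (∑ a, ∑ e, P (a, e) ^ (1 + s) * (∑ a', P (a', e)) ^ (-s)) = C := rfl
  have hexp : Real.exp (-(-Real.log C)) = C := by rw [neg_neg, Real.exp_log hC]
  rw [hexp]
  constructor
  · exact main
  · by_contra hc
    push_neg at hc
    have hc' : ∀ ω, (1 / s) * (M : ℝ) ^ s * C < MI ω := fun ω => hc ω
    obtain ⟨ω₀, hμω₀⟩ : ∃ ω, 0 < μ ω := by
      by_contra h
      push_neg at h
      have hz : ∑ ω, μ ω = 0 :=
        Finset.sum_eq_zero fun ω _ => le_antisymm (h ω) (hμ ω)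
      rw [hz] at hμ1; norm_num at hμ1
    have hlt : ∑ ω, μ ω * ((1 / s) * (M : ℝ) ^ s * C) < ∑ ω, μ ω * MI ω := by
      refine Finset.sum_lt_sum (fun ω _ => mul_le_mul_of_nonneg_left (hc' ω).le (hμ ω))
        ⟨ω₀, Finset.mem_univ _, mul_lt_mul_of_pos_left (hc' ω₀) hμω₀⟩
    rw [← Finset.sum_mul, hμ1, one_mul] at hlt
    linarith
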